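/- For the uniform distribution U_r on [−r,r]ᵈ and any ε ∈ [0, r], the maximum over all v with ‖v‖_∞ ≤ ε of tv(U_r, U_r + v) equals 1 − (1 − ε/(2r))ᵈ, attained at v = (ε, …, ε), and satisfies 1 − e^{−dε/(2r)} ≤ 1 − (1 − ε/(2r))ᵈ ≤ 1 − 4^{−dε/(2r)}. -/

import Mathlib

open MeasureTheory

/-- Total variation distance between two measures. -/
noncomputable def tv {α : Type*} [MeasurableSpace α] (P Q : Measure α) : ℝ :=
  ⨆ A : {s : Set α // MeasurableSet s}, |(P A.1).toReal - (Q A.1).toReal|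

/-- The uniform distribution on the ℓ∞ ball of radius `r` centered at the origin in ℝᵈ. -/
noncomputable def uniformCube (d : ℕ) (r : ℝ) : Measure (EuclideanSpace ℝ (Fin d)) :=
  (ENNReal.ofReal ((2 * r) ^ d))⁻¹ •
    volume.restrict {x : EuclideanSpace ℝ (Fin d) | ∀ i, |x i| ≤ r}

section aux

variable {d : ℕ}

lemma measSet_coord (s : Fin d → Set ℝ) (hs : ∀ i, MeasurableSet (s i)) :
    MeasurableSet {x : EuclideanSpace ℝ (Fin d) | ∀ i, x i ∈ s i} := by
  have : {x : EuclideanSpace ℝ (Fin d) | ∀ i, x i ∈ s i}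
      = ⋂ i, (fun x : EuclideanSpace ℝ (Fin d) => x i) ⁻¹' (s i) := by ext x; simp
  rw [this]
  exact MeasurableSet.iInter fun i =>
    ((hs i).preimage ((measurable_pi_apply i).comp
      (MeasurableEquiv.toLp 2 (Fin d → ℝ)).symm.measurable))

lemma vol_coord (s : Fin d → Set ℝ) (hs : ∀ i, MeasurableSet (s i)) :
    volume {x : EuclideanSpace ℝ (Fin d) | ∀ i, x i ∈ s i} = ∏ i, volume (s i) := by
  have h : {x : EuclideanSpace ℝ (Fin d) | ∀ i, x i ∈ s i}
      = ((MeasurableEquiv.toLp 2 (Fin d → ℝ)).symm) ⁻¹' (Set.pi Set.univ s) := by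
    ext x; simp [Set.mem_pi, MeasurableEquiv.coe_toLp_symm]
  rw [h, (EuclideanSpace.volume_preserving_symm_measurableEquiv_toLp (Fin d)).measure_preimage
    ((MeasurableSet.univ_pi hs).nullMeasurableSet), volume_pi_pi]

lemma tv_shift (r : ℝ) (hr : 0 < r) (v : EuclideanSpace ℝ (Fin d))
    (hv : ∀ i, |v i| ≤ r) :
    tv (uniformCube d r) ((uniformCube d r).map (· + v))
      = 1 - ∏ i, (1 - |v i| / (2 * r)) := by
  have h2r : (0:ℝ) < 2 * r := by linarith
  set C : Set (EuclideanSpace ℝ (Fin d)) := {x | ∀ i, |x i| ≤ r} with hC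
  set Cv : Set (EuclideanSpace ℝ (Fin d)) := {x | ∀ i, |x i - v i| ≤ r} with hCv
  have hCc : C = {x : EuclideanSpace ℝ (Fin d) | ∀ i, x i ∈ Set.Icc (-r) r} := by
    ext x; simp [hC, abs_le, Set.mem_Icc]
  have hCvc : Cv = {x : EuclideanSpace ℝ (Fin d) | ∀ i, x i ∈ Set.Icc (v i - r) (v i + r)} := by
    ext x; simp only [hCv, Set.mem_setOf_eq, Set.mem_Icc, abs_le]
    constructor <;> intro h i <;> have := h i <;> constructor <;> linarith [this.1, this.2]
  have hCCvc : C ∩ Cv = {x : EuclideanSpace ℝ (Fin d) | ∀ i, x i ∈ Set.Icc (max (-r) (v i - r)) (min r (v i + r))} := by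
    ext x
    simp only [hC, hCv, Set.mem_inter_iff, Set.mem_setOf_eq, Set.mem_Icc, abs_le,
      max_le_iff, le_min_iff]
    constructor
    · rintro ⟨h1, h2⟩ i
      obtain ⟨a, b⟩ := h1 i; obtain ⟨a', b'⟩ := h2 i
      exact ⟨⟨a, by linarith⟩, b, by linarith⟩
    · intro h
      exact ⟨fun i => ⟨(h i).1.1, (h i).2.1⟩,
        fun i => ⟨by linarith [(h i).1.2], by linarith [(h i).2.2]⟩⟩
  have measC : MeasurableSet C := by
    rw [hCc]; exact measSet_coord _ fun i => measurableSet_Icc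
  have measCv : MeasurableSet Cv := by
    rw [hCvc]; exact measSet_coord _ fun i => measurableSet_Icc
  set L : ℝ := (2 * r) ^ d with hLdef
  have hL : 0 < L := by positivity
  have volC : volume C = ENNReal.ofReal L := by
    rw [hCc, vol_coord _ fun i => measurableSet_Icc]
    simp only [Real.volume_Icc]
    rw [Finset.prod_const, Finset.card_fin, ← ENNReal.ofReal_pow (by linarith)]
    congr 1
    rw [hLdef]
    ring
  have volCv : volume Cv = ENNReal.ofReal L := by
    rw [hCvc, vol_coord _ fun i => measurableSet_Icc]
    simp only [Real.volume_Icc]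
    have h1 : ∀ i ∈ Finset.univ, ENNReal.ofReal (v i + r - (v i - r))
        = ENNReal.ofReal (2 * r) := by
      intro i _; congr 1; ring
    rw [Finset.prod_congr rfl h1, Finset.prod_const, Finset.card_fin,
      ← ENNReal.ofReal_pow (by linarith)]
  set p : ℝ := ∏ i, (1 - |v i| / (2 * r)) with hpdef
  have hfac : ∀ i : Fin d, 0 ≤ 1 - |v i| / (2 * r) := by
    intro i
    have : |v i| / (2 * r) ≤ 1 := (div_le_one h2r).2 (le_trans (hv i) (by linarith))
    linarith
  have hp0 : 0 ≤ p := Finset.prod_nonneg fun i _ => hfac i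
  have hp1 : p ≤ 1 := by
    apply Finset.prod_le_one (fun i _ => hfac i) (fun i _ => by
      have : 0 ≤ |v i| / (2 * r) := by positivity
      linarith)
  have volI : volume (C ∩ Cv) = ENNReal.ofReal (L * p) := by
    rw [hCCvc, vol_coord _ fun i => measurableSet_Icc]
    have hlen : ∀ i ∈ Finset.univ,
        volume (Set.Icc (max (-r) (v i - r)) (min r (v i + r)))
          = ENNReal.ofReal ((2 * r) * (1 - |v i| / (2 * r))) := by
      intro i _
      rw [Real.volume_Icc]
      congr 1
      have h0 : (2 * r) * (1 - |v i| / (2 * r)) = 2 * r - |v i| := by field_simp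
      rw [h0]
      rcases le_total 0 (v i) with h | h
      · rw [abs_of_nonneg h, min_eq_left (by linarith), max_eq_right (by linarith)]; ring
      · rw [abs_of_nonpos h, min_eq_right (by linarith), max_eq_left (by linarith)]; ring
    rw [Finset.prod_congr rfl hlen,
      ← ENNReal.ofReal_prod_of_nonneg (fun i _ => mul_nonneg h2r.le (hfac i))]
    congr 1
    rw [Finset.prod_mul_distrib, Finset.prod_const, Finset.card_fin]
  -- measure applications
  set c : ENNReal := (ENNReal.ofReal L)⁻¹ with hcdef
  have hPapp : ∀ {A : Set (EuclideanSpace ℝ (Fin d))}, MeasurableSet A →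
      uniformCube d r A = c * volume (A ∩ C) := by
    intro A hA
    rw [uniformCube, Measure.smul_apply, Measure.restrict_apply hA, smul_eq_mul]
  have hQapp : ∀ {A : Set (EuclideanSpace ℝ (Fin d))}, MeasurableSet A →
      ((uniformCube d r).map (· + v)) A = c * volume (A ∩ Cv) := by
    intro A hA
    rw [Measure.map_apply (measurable_add_const v) hA, uniformCube, Measure.smul_apply,
      Measure.restrict_apply (hA.preimage (measurable_add_const v)), smul_eq_mul]
    congr 1
    have hset : A ∩ Cv = (· + (-v)) ⁻¹' ((· + v) ⁻¹' A ∩ C) := by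
      ext x
      have h1 : x + (-v) + v = x := by abel
      have h2 : ∀ i, (x + (-v)) i = x i - v i := by
        intro i
        simp [sub_eq_add_neg]
      simp only [Set.mem_inter_iff, Set.mem_preimage, hCv, hC, Set.mem_setOf_eq, h1, h2]
    rw [hset, measure_preimage_add_right]
  -- diff volumes
  have volDiffC : volume (C \ Cv) = ENNReal.ofReal (L - L * p) := by
    rw [show C \ Cv = C \ (C ∩ Cv) by rw [Set.diff_self_inter],
      measure_diff Set.inter_subset_left (measC.inter measCv).nullMeasurableSet
        (by rw [volI]; exact ENNReal.ofReal_ne_top),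
      volC, volI, ← ENNReal.ofReal_sub _ (by positivity)]
  have volDiffCv : volume (Cv \ C) = ENNReal.ofReal (L - L * p) := by
    rw [show Cv \ C = Cv \ (Cv ∩ C) by rw [Set.diff_self_inter],
      measure_diff Set.inter_subset_left (measCv.inter measC).nullMeasurableSet
        (by rw [Set.inter_comm, volI]; exact ENNReal.ofReal_ne_top),
      volCv, Set.inter_comm, volI, ← ENNReal.ofReal_sub _ (by positivity)]
  have hLp : 0 ≤ L - L * p := by nlinarith
  have hcreal : c.toReal = L⁻¹ := by
    rw [hcdef, ENNReal.toReal_inv, ENNReal.toReal_ofReal hL.le]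
  -- claim A
  have key : ∀ A : Set (EuclideanSpace ℝ (Fin d)), MeasurableSet A →
      |(uniformCube d r A).toReal - (((uniformCube d r).map (· + v)) A).toReal| ≤ 1 - p := by
    intro A hA
    have finb : volume ((A ∩ C) ∩ Cv) ≠ ⊤ := by
      apply ne_top_of_le_ne_top (b := ENNReal.ofReal L) ENNReal.ofReal_ne_top
      rw [← volC]; exact measure_mono (by intro x hx; exact hx.1.2)
    have fina : volume ((A ∩ C) \ Cv) ≠ ⊤ := by
      apply ne_top_of_le_ne_top (b := ENNReal.ofReal L) ENNReal.ofReal_ne_top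
      rw [← volC]; exact measure_mono (fun x hx => hx.1.2)
    have fina' : volume ((A ∩ Cv) \ C) ≠ ⊤ := by
      apply ne_top_of_le_ne_top (b := ENNReal.ofReal L) ENNReal.ofReal_ne_top
      rw [← volCv]; exact measure_mono (fun x hx => hx.1.2)
    set β : ℝ := (volume ((A ∩ C) ∩ Cv)).toReal
    set α : ℝ := (volume ((A ∩ C) \ Cv)).toReal
    set α' : ℝ := (volume ((A ∩ Cv) \ C)).toReal
    have hsplit1 : (volume (A ∩ C)).toReal = β + α := by
      rw [← measure_inter_add_diff (A ∩ C) measCv, ENNReal.toReal_add finb fina]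
    have hsplit2 : (volume (A ∩ Cv)).toReal = β + α' := by
      rw [← measure_inter_add_diff (A ∩ Cv) measC, ENNReal.toReal_add ?_ fina']
      · congr 2
        rw [show (A ∩ Cv) ∩ C = (A ∩ C) ∩ Cv by ext x; simp only [Set.mem_inter_iff]; tauto]
      · rw [show (A ∩ Cv) ∩ C = (A ∩ C) ∩ Cv by ext x; simp only [Set.mem_inter_iff]; tauto]
        exact finb
    have hα : α ≤ L - L * p := by
      have := measure_mono (μ := volume) (show (A ∩ C) \ Cv ⊆ C \ Cv from
        fun x hx => ⟨hx.1.2, hx.2⟩)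
      rw [volDiffC] at this
      calc α ≤ (ENNReal.ofReal (L - L * p)).toReal := ENNReal.toReal_mono ENNReal.ofReal_ne_top this
        _ = L - L * p := ENNReal.toReal_ofReal hLp
    have hα' : α' ≤ L - L * p := by
      have := measure_mono (μ := volume) (show (A ∩ Cv) \ C ⊆ Cv \ C from
        fun x hx => ⟨hx.1.2, hx.2⟩)
      rw [volDiffCv] at this
      calc α' ≤ (ENNReal.ofReal (L - L * p)).toReal := ENNReal.toReal_mono ENNReal.ofReal_ne_top this
        _ = L - L * p := ENNReal.toReal_ofReal hLp
    have hα0 : 0 ≤ α := ENNReal.toReal_nonneg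
    have hα'0 : 0 ≤ α' := ENNReal.toReal_nonneg
    rw [hPapp hA, hQapp hA, ENNReal.toReal_mul, ENNReal.toReal_mul, hcreal,
      hsplit1, hsplit2]
    have hrw : L⁻¹ * (β + α) - L⁻¹ * (β + α') = L⁻¹ * (α - α') := by ring
    rw [hrw, abs_mul, abs_of_nonneg (by positivity : (0:ℝ) ≤ L⁻¹)]
    have habs : |α - α'| ≤ L - L * p := abs_le.2 ⟨by linarith, by linarith⟩
    calc L⁻¹ * |α - α'| ≤ L⁻¹ * (L - L * p) := by
          apply mul_le_mul_of_nonneg_left habs (by positivity)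
      _ = 1 - p := by field_simp
  -- equality at C \ Cv
  have hA0 : MeasurableSet (C \ Cv) := measC.diff measCv
  have hval : |(uniformCube d r (C \ Cv)).toReal
      - (((uniformCube d r).map (· + v)) (C \ Cv)).toReal| = 1 - p := by
    rw [hPapp hA0, hQapp hA0,
      show (C \ Cv) ∩ C = C \ Cv from Set.inter_eq_left.2 Set.diff_subset,
      show (C \ Cv) ∩ Cv = ∅ from Set.diff_inter_self,
      volDiffC]
    simp only [measure_empty, mul_zero, ENNReal.toReal_zero, sub_zero,
      ENNReal.toReal_mul, hcreal, ENNReal.toReal_ofReal hLp]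
    rw [abs_of_nonneg (by positivity)]
    field_simp
  -- conclude
  haveI : Nonempty {s : Set (EuclideanSpace ℝ (Fin d)) // MeasurableSet s} := ⟨⟨∅, MeasurableSet.empty⟩⟩
  apply le_antisymm
  · exact ciSup_le fun A => key A.1 A.2
  · have hb : BddAbove (Set.range fun A : {s : Set (EuclideanSpace ℝ (Fin d)) // MeasurableSet s} =>
        |(uniformCube d r A.1).toReal - (((uniformCube d r).map (· + v)) A.1).toReal|) := by
      refine ⟨1 - p, ?_⟩
      rintro x ⟨A, rfl⟩
      exact key A.1 A.2
    have := le_ciSup hb ⟨C \ Cv, hA0⟩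
    rw [hval] at this
    exact this

end aux

lemma four_rpow_le (z : ℝ) (h0 : 0 ≤ z) (h2 : z ≤ 1/2) : (4:ℝ) ^ (-z) ≤ 1 - z := by
  have hlog : Real.log 4 = 2 * Real.log 2 := by
    rw [show (4:ℝ) = 2^2 by norm_num, Real.log_pow]; push_cast; ring
  have hx2 : Real.exp (-(1/2:ℝ) * Real.log 4) = 1/2 := by
    rw [hlog, show -(1/2:ℝ) * (2*Real.log 2) = -Real.log 2 by ring, Real.exp_neg,
      Real.exp_log (by norm_num : (0:ℝ) < 2)]
    norm_num
  have hc := convexOn_exp.2 (Set.mem_univ (0:ℝ))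
    (Set.mem_univ (-(1/2:ℝ) * Real.log 4)) (by linarith : (0:ℝ) ≤ 1 - 2*z)
    (by linarith : (0:ℝ) ≤ 2*z) (by ring)
  simp only [smul_eq_mul, mul_zero, zero_add, Real.exp_zero, mul_one] at hc
  rw [hx2] at hc
  have hexp : (4:ℝ)^(-z) = Real.exp (2*z * (-(1/2) * Real.log 4)) := by
    rw [Real.rpow_def_of_pos (by norm_num : (0:ℝ) < 4)]
    congr 1; ring
  rw [hexp]; linarith

theorem stmt17 (d : ℕ) (hd : 1 ≤ d) (r ε : ℝ) (hr : 0 < r) (hε0 : 0 ≤ ε) (hεr : ε ≤ r) :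
    tv (uniformCube d r)
        ((uniformCube d r).map (· + ((EuclideanSpace.equiv (Fin d) ℝ).symm fun _ => ε))) =
      1 - (1 - ε / (2 * r)) ^ d ∧
    (∀ v : EuclideanSpace ℝ (Fin d), (∀ i, |v i| ≤ ε) →
      tv (uniformCube d r) ((uniformCube d r).map (· + v)) ≤ 1 - (1 - ε / (2 * r)) ^ d) ∧
    1 - Real.exp (-((d : ℝ) * ε) / (2 * r)) ≤ 1 - (1 - ε / (2 * r)) ^ d ∧
    1 - (1 - ε / (2 * r)) ^ d ≤ 1 - (4 : ℝ) ^ (-((d : ℝ) * ε) / (2 * r)) := by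
  have h2r : (0:ℝ) < 2 * r := by linarith
  set z : ℝ := ε / (2 * r) with hzdef
  have hz0 : 0 ≤ z := by positivity
  have hz2 : z ≤ 1/2 := by
    rw [hzdef, div_le_iff₀ h2r]; linarith
  have hcoord : ∀ i : Fin d, ((EuclideanSpace.equiv (Fin d) ℝ).symm fun _ => ε) i = ε := by
    intro i; simp [EuclideanSpace.equiv]
  refine ⟨?_, ?_, ?_, ?_⟩
  · rw [tv_shift r hr _ (fun i => by rw [hcoord i, abs_of_nonneg hε0]; exact hεr)]
    have h1 : ∀ i ∈ Finset.univ, (1 - |((EuclideanSpace.equiv (Fin d) ℝ).symm fun _ => ε) i| / (2*r))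
        = 1 - ε / (2*r) := by
      intro i _; rw [hcoord i, abs_of_nonneg hε0]
    rw [Finset.prod_congr rfl h1, Finset.prod_const, Finset.card_fin]
  · intro v hv
    rw [tv_shift r hr v (fun i => (hv i).trans hεr)]
    have h1 : (1 - ε/(2*r))^d = ∏ _i : Fin d, (1 - ε/(2*r)) := by
      rw [Finset.prod_const, Finset.card_fin]
    have h2 : ∏ _i : Fin d, (1 - ε/(2*r)) ≤ ∏ i, (1 - |v i| / (2*r)) := by
      apply Finset.prod_le_prod (fun i _ => by linarith) (fun i _ => by
        have : |v i| / (2*r) ≤ ε / (2*r) := by gcongr; exact hv i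
        linarith)
    rw [h1]; linarith
  · have hz1 : 1 - z ≤ Real.exp (-z) := by
      have := Real.add_one_le_exp (-z); linarith
    have h1 : (1-z)^d ≤ Real.exp (-z) ^ d := pow_le_pow_left₀ (by linarith) hz1 d
    rw [← Real.exp_nat_mul] at h1
    have harg : (d:ℝ) * (-z) = -((d:ℝ)*ε)/(2*r) := by rw [hzdef]; ring
    rw [harg] at h1
    linarith
  · have h4 : (4:ℝ)^(-((d:ℝ)*ε)/(2*r)) = ((4:ℝ)^(-z))^d := by
      rw [show -((d:ℝ)*ε)/(2*r) = (-z) * (d:ℝ) by rw [hzdef]; ring,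
        Real.rpow_mul (by norm_num : (0:ℝ) ≤ 4), Real.rpow_natCast]
    have h5 : ((4:ℝ)^(-z))^d ≤ (1-z)^d :=
      pow_le_pow_left₀ (Real.rpow_nonneg (by norm_num) _) (four_rpow_le z hz0 hz2) d
    rw [h4]
    linarith
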